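/- Suppose the set {n ≥ 2 : I^n M ∩ N ≠ I·(I^{n-1} M ∩ N)} is finite of cardinality r−1 for some integer r ≥ 1. Then for all n ≥ r, I^n M ∩ N ⊆ I^{n-r}·N. In other words, the weak Artin-Rees number w(N,M;I) is at most the medium Artin-Rees number m(N,M;I). -/

import Mathlib

/-- If the set `{n ≥ 2 : I^n M ∩ N ≠ I·(I^{n-1} M ∩ N)}` is finite of
cardinality `r-1` for some `r ≥ 1`, then for all `n ≥ r`, `I^n M ∩ N ⊆ I^{n-r}·N`
(i.e. the weak Artin-Rees number is at most the medium Artin-Rees number). -/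
theorem stmt_2 {A : Type*} [CommRing A] [IsNoetherianRing A]
    {M : Type*} [AddCommGroup M] [Module A M] [Module.Finite A M]
    (I : Ideal A) (N : Submodule A M) (r : ℕ) (hr : 1 ≤ r)
    (hfin : {n : ℕ | 2 ≤ n ∧
      (I ^ n • ⊤ ⊓ N : Submodule A M) ≠ I • (I ^ (n - 1) • ⊤ ⊓ N)}.Finite)
    (hcard : {n : ℕ | 2 ≤ n ∧
      (I ^ n • ⊤ ⊓ N : Submodule A M) ≠ I • (I ^ (n - 1) • ⊤ ⊓ N)}.ncard = r - 1) :
    ∀ n, r ≤ n → (I ^ n • ⊤ ⊓ N : Submodule A M) ≤ I ^ (n - r) • N := by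
  classical
  set good : ℕ → Prop :=
    fun k => (I ^ k • ⊤ ⊓ N : Submodule A M) = I • (I ^ (k - 1) • ⊤ ⊓ N) with hgooddef
  -- key induction: G_n ≤ I^{#good indices in [2,n]} • N
  have key : ∀ n, 1 ≤ n → (I ^ n • ⊤ ⊓ N : Submodule A M) ≤
      I ^ ((Finset.Icc 2 n).filter good).card • N := by
    intro n hn
    induction n with
    | zero => omega
    | succ m ih =>
      rcases Nat.lt_or_ge m 1 with h1 | h1
      · have : m = 0 := by omega
        subst this
        have : (Finset.Icc 2 1).filter good = ∅ := by
          apply Finset.filter_false_of_mem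
          intro x hx
          simp [Finset.mem_Icc] at hx
        rw [this]
        simpa using inf_le_right
      · have ihm := ih h1
        have hicc : Finset.Icc 2 (m + 1) = insert (m + 1) (Finset.Icc 2 m) := by
          ext x
          simp only [Finset.mem_Icc, Finset.mem_insert]
          omega
        have hnotmem : m + 1 ∉ Finset.Icc 2 m := by simp
        by_cases hg : good (m + 1)
        · have hcardeq : ((Finset.Icc 2 (m + 1)).filter good).card
              = ((Finset.Icc 2 m).filter good).card + 1 := by
            rw [hicc, Finset.filter_insert, if_pos hg,
              Finset.card_insert_of_notMem (fun h => hnotmem (Finset.mem_of_mem_filter _ h))]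
          rw [hcardeq]
          have : (I ^ (m + 1) • ⊤ ⊓ N : Submodule A M)
              = I • (I ^ m • ⊤ ⊓ N) := by exact hg
          rw [this, pow_succ, mul_comm, ← smul_eq_mul, Submodule.smul_assoc]
          exact smul_mono_right I ihm
        · have hcardeq : ((Finset.Icc 2 (m + 1)).filter good).card
              = ((Finset.Icc 2 m).filter good).card := by
            rw [hicc, Finset.filter_insert, if_neg hg]
          rw [hcardeq]
          refine le_trans (inf_le_inf_right N ?_) ihm
          exact Submodule.smul_mono_left (Ideal.pow_le_pow_right (Nat.le_succ m))
  intro n hn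
  have hn1 : 1 ≤ n := le_trans hr hn
  -- count bad indices
  have hsub : (((Finset.Icc 2 n).filter (fun k => ¬ good k)) : Set ℕ) ⊆
      {n : ℕ | 2 ≤ n ∧
        (I ^ n • ⊤ ⊓ N : Submodule A M) ≠ I • (I ^ (n - 1) • ⊤ ⊓ N)} := by
    intro x hx
    simp only [Finset.coe_filter, Set.mem_setOf_eq, Finset.mem_Icc] at hx
    exact ⟨hx.1.1, hx.2⟩
  have hbad : ((Finset.Icc 2 n).filter (fun k => ¬ good k)).card ≤ r - 1 := by
    have := Set.ncard_le_ncard hsub hfin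
    rwa [Set.ncard_coe_finset, hcard] at this
  have htot : ((Finset.Icc 2 n).filter good).card
      + ((Finset.Icc 2 n).filter (fun k => ¬ good k)).card = n - 1 := by
    rw [Finset.card_filter_add_card_filter_not, Nat.card_Icc]
    omega
  have hge : n - r ≤ ((Finset.Icc 2 n).filter good).card := by omega
  refine le_trans (key n hn1) (Submodule.smul_mono_left ?_)
  exact Ideal.pow_le_pow_right hge
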